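/- Let m ∈ {1, 2, 3, 4}. With x_j = cos(jπ/n) the Chebyshev points, define E_m^0(n) = Σ_{1 ≤ i_1 < ⋯ < i_m ≤ n} ∏_{t=1}^{m} (1 − cos(i_t π/n))^{−1}, the elementary symmetric function of order m of the numbers 1/(1−x_1), …, 1/(1−x_n). Then lim_{n→∞} E_m^0(n)/n^{2m} = 2^m/(2m+1)!; that is, E_1^0 ~ n²/3, E_2^0 ~ n⁴/30, E_3^0 ~ n⁶/630 and E_4^0 ~ n⁸/22680. -/

import Mathlib

open Real Filter Finset

lemma bern5 : bernoulli' 5 = 0 := by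
  rw [bernoulli'_def]
  norm_num [Finset.sum_range_succ, (by decide : Nat.choose 5 2 = 10)]

lemma bern6 : bernoulli' 6 = 1/42 := by
  rw [bernoulli'_def]
  norm_num [Finset.sum_range_succ, bern5, (by decide : Nat.choose 6 2 = 15),
    (by decide : Nat.choose 6 4 = 15)]

lemma bern7 : bernoulli' 7 = 0 := by
  rw [bernoulli'_def]
  norm_num [Finset.sum_range_succ, bern5, bern6, (by decide : Nat.choose 7 2 = 21),
    (by decide : Nat.choose 7 4 = 35), (by decide : Nat.choose 7 6 = 7)]

lemma bern8 : bernoulli' 8 = -1/30 := by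
  rw [bernoulli'_def]
  norm_num [Finset.sum_range_succ, bern5, bern6, bern7, (by decide : Nat.choose 8 2 = 28),
    (by decide : Nat.choose 8 4 = 70), (by decide : Nat.choose 8 6 = 28)]

lemma hz3 : HasSum (fun n : ℕ => (1:ℝ) / (n:ℝ) ^ (2*3)) (π ^ 6 / 945) := by
  convert hasSum_zeta_nat (k := 3) (by norm_num) using 1
  rw [bernoulli_eq_bernoulli'_of_ne_one (by norm_num), bern6]
  norm_num [Nat.factorial]
  ring

lemma hz4 : HasSum (fun n : ℕ => (1:ℝ) / (n:ℝ) ^ (2*4)) (π ^ 8 / 9450) := by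
  convert hasSum_zeta_nat (k := 4) (by norm_num) using 1
  rw [bernoulli_eq_bernoulli'_of_ne_one (by norm_num), bern8]
  norm_num [Nat.factorial]
  ring

noncomputable def Esym (s : Finset ℕ) (f : ℕ → ℝ) (k : ℕ) : ℝ :=
  ∑ I ∈ s.powersetCard k, ∏ i ∈ I, f i

noncomputable def Psum (s : Finset ℕ) (f : ℕ → ℝ) (r : ℕ) : ℝ :=
  ∑ i ∈ s, f i ^ r

lemma Esym_zero (s : Finset ℕ) (f : ℕ → ℝ) : Esym s f 0 = 1 := by
  simp [Esym]

lemma Esym_empty (f : ℕ → ℝ) (k : ℕ) (hk : k ≠ 0) : Esym ∅ f k = 0 := by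
  rw [Esym, Finset.powersetCard_eq_empty.mpr (by simpa using Nat.pos_of_ne_zero hk),
    Finset.sum_empty]

lemma Esym_insert (a : ℕ) (s : Finset ℕ) (ha : a ∉ s) (f : ℕ → ℝ) (k : ℕ) :
    Esym (insert a s) f (k + 1) = Esym s f (k + 1) + f a * Esym s f k := by
  unfold Esym
  rw [Finset.powersetCard_succ_insert ha, Finset.sum_union, Finset.sum_image]
  · congr 1
    rw [Finset.mul_sum]
    refine Finset.sum_congr rfl fun I hI => ?_
    have hIs := (Finset.mem_powersetCard.mp hI).1
    exact Finset.prod_insert (fun h => ha (hIs h))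
  · intro I hI J hJ hIJ
    have hIs := (Finset.mem_powersetCard.mp hI).1
    have hJs := (Finset.mem_powersetCard.mp hJ).1
    have haI : a ∉ I := fun h => ha (hIs h)
    have haJ : a ∉ J := fun h => ha (hJs h)
    rw [← Finset.erase_insert haI, ← Finset.erase_insert haJ, hIJ]
  · rw [Finset.disjoint_right]
    intro I hI hI'
    obtain ⟨J, hJ, rfl⟩ := Finset.mem_image.mp hI
    have := (Finset.mem_powersetCard.mp hI').1 (Finset.mem_insert_self a J)
    exact ha this

lemma newton (s : Finset ℕ) (f : ℕ → ℝ) :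
    Esym s f 1 = Psum s f 1 ∧
    2 * Esym s f 2 = Esym s f 1 * Psum s f 1 - Psum s f 2 ∧
    3 * Esym s f 3 = Esym s f 2 * Psum s f 1 - Esym s f 1 * Psum s f 2 + Psum s f 3 ∧
    4 * Esym s f 4 = Esym s f 3 * Psum s f 1 - Esym s f 2 * Psum s f 2 + Esym s f 1 * Psum s f 3
      - Psum s f 4 := by
  induction s using Finset.induction with
  | empty => simp [Esym_empty, Psum]
  | insert _ _ ha =>
    rename_i a s ih
    obtain ⟨h1, h2, h3, h4⟩ := ih
    have e1 := Esym_insert a s ha f 0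
    have e2 := Esym_insert a s ha f 1
    have e3 := Esym_insert a s ha f 2
    have e4 := Esym_insert a s ha f 3
    rw [Esym_zero] at e1
    have p : ∀ r, Psum (insert a s) f r = f a ^ r + Psum s f r := fun r =>
      Finset.sum_insert ha
    norm_num at e1 e2 e3 e4
    refine ⟨?_, ?_, ?_, ?_⟩
    · rw [e1, p 1]; linarith [h1]
    · rw [e2, e1, p 1, p 2]
      linear_combination h2 + f a * h1
    · rw [e3, e2, e1, p 1, p 2, p 3]
      linear_combination h3 + f a * h2
    · rw [e4, e3, e2, e1, p 1, p 2, p 3, p 4]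
      linear_combination h4 + f a * h3
lemma one_sub_cos_ge {x : ℝ} (h0 : 0 ≤ x) (h : x ≤ π) : 2 / π^2 * x^2 ≤ 1 - Real.cos x := by
  have := Real.cos_le_one_sub_mul_cos_sq (x := x) (by rwa [abs_of_nonneg h0])
  linarith

lemma tendsto_sin_div : Tendsto (fun y : ℝ => Real.sin y / y) (nhdsWithin 0 {0}ᶜ) (nhds 1) := by
  have h := Real.hasDerivAt_sin 0
  rw [hasDerivAt_iff_tendsto_slope] at h
  rw [Real.cos_zero] at h
  refine h.congr fun y => ?_
  simp [slope_def_field, div_eq_mul_inv, mul_comm]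

lemma aux_lim (j : ℕ) (hj : 1 ≤ j) :
    Tendsto (fun n : ℕ => (n:ℝ)^2 * (1 - Real.cos (j * π / n))) atTop
      (nhds ((j:ℝ)^2 * π^2 / 2)) := by
  have hjpos : (0:ℝ) < j := by exact_mod_cast hj
  have hx : Tendsto (fun n : ℕ => (j:ℝ) * π / (2 * n)) atTop (nhdsWithin 0 {0}ᶜ) := by
    apply tendsto_nhdsWithin_of_tendsto_nhds_of_eventually_within
    · have : Tendsto (fun n : ℕ => ((j:ℝ) * π / 2) / n) atTop (nhds 0) :=
        tendsto_const_div_atTop_nhds_zero_nat _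
      refine this.congr fun n => by ring
    · filter_upwards [eventually_ge_atTop 1] with n hn
      have hn' : (0:ℝ) < n := by exact_mod_cast hn
      have : 0 < (j:ℝ) * π / (2 * n) := by positivity
      exact Set.mem_compl_singleton_iff.mpr (ne_of_gt this)
  have h1 : Tendsto (fun n : ℕ => Real.sin ((j:ℝ) * π / (2 * n)) / ((j:ℝ) * π / (2 * n)))
      atTop (nhds 1) := tendsto_sin_div.comp hx
  have h2 : Tendsto (fun n : ℕ => (j:ℝ) * π / 2 *
      (Real.sin ((j:ℝ) * π / (2 * n)) / ((j:ℝ) * π / (2 * n)))) atTop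
      (nhds ((j:ℝ) * π / 2)) := by
    simpa using h1.const_mul ((j:ℝ) * π / 2)
  have h3 : Tendsto (fun n : ℕ => (n:ℝ) * Real.sin ((j:ℝ) * π / (2 * n))) atTop
      (nhds ((j:ℝ) * π / 2)) := by
    refine h2.congr' ?_
    filter_upwards [eventually_ge_atTop 1] with n hn
    have hn' : (0:ℝ) < n := by exact_mod_cast hn
    field_simp
  have h4 := (h3.mul h3).const_mul (2:ℝ)
  refine h4.congr' ?_ |>.mono_right (by
    rw [show (2:ℝ) * ((j:ℝ) * π / 2 * ((j:ℝ) * π / 2)) = (j:ℝ)^2 * π^2 / 2 by ring])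
  filter_upwards [eventually_ge_atTop 1] with n hn
  have hn' : (0:ℝ) < n := by exact_mod_cast hn
  have key : 1 - Real.cos ((j:ℝ) * π / n) = 2 * Real.sin ((j:ℝ) * π / (2 * n)) ^ 2 := by
    have := Real.sin_sq_eq_half_sub ((j:ℝ) * π / (2 * n))
    rw [show 2 * ((j:ℝ) * π / (2 * n)) = (j:ℝ) * π / n by field_simp] at this
    linarith
  rw [key]
  ring

lemma psum_lim (r : ℕ) (hr : 1 ≤ r) {c : ℝ}
    (hc : HasSum (fun j : ℕ => 1 / (j:ℝ) ^ (2 * r)) c) :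
    Tendsto (fun n : ℕ =>
      (∑ j ∈ Finset.Icc 1 n, (1 / (1 - Real.cos (j * π / n))) ^ r) / (n:ℝ) ^ (2 * r))
      atTop (nhds ((2 / π ^ 2) ^ r * c)) := by
  set F : ℕ → ℕ → ℝ := fun n j => if j ∈ Finset.Icc 1 n then
      (1 / ((n:ℝ)^2 * (1 - Real.cos (j * π / n)))) ^ r else 0 with hF
  set a : ℕ → ℝ := fun j => (2 / π ^ 2) ^ r * (1 / (j:ℝ) ^ (2 * r)) with ha
  set bound : ℕ → ℝ := fun j => (1 / (2 * (j:ℝ)^2)) ^ r with hbound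
  have hL : ∀ n j : ℕ, j ∈ Finset.Icc 1 n →
      2 * (j:ℝ)^2 ≤ (n:ℝ)^2 * (1 - Real.cos (j * π / n)) := by
    intro n j hj
    rw [Finset.mem_Icc] at hj
    obtain ⟨hj1, hjn⟩ := hj
    have hn1 : 1 ≤ n := le_trans hj1 hjn
    have hnp : (0:ℝ) < n := by exact_mod_cast hn1
    have hjp : (0:ℝ) < j := by exact_mod_cast hj1
    have hjn' : (j:ℝ) ≤ n := by exact_mod_cast hjn
    have hxle : (j:ℝ) * π / n ≤ π := by
      rw [div_le_iff₀ hnp]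
      nlinarith [pi_pos]
    have hx0 : 0 ≤ (j:ℝ) * π / n := by positivity
    have := one_sub_cos_ge hx0 hxle
    have h2 : 2 / π^2 * ((j:ℝ) * π / n)^2 = 2 * (j:ℝ)^2 / (n:ℝ)^2 := by
      field_simp
    rw [h2] at this
    calc 2 * (j:ℝ)^2 = (n:ℝ)^2 * (2 * (j:ℝ)^2 / (n:ℝ)^2) := by field_simp
    _ ≤ (n:ℝ)^2 * (1 - Real.cos (j * π / n)) := by
        apply mul_le_mul_of_nonneg_left this (by positivity)
  have hsummable : Summable bound := by
    have : bound = fun j : ℕ => (1/2:ℝ)^r * (1 / (j:ℝ)^(2*r)) := by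
      funext j
      simp only [hbound, one_div, mul_inv, mul_pow, pow_mul, inv_pow]
    rw [this]
    exact hc.summable.mul_left _
  have h_ab : ∀ j : ℕ, Tendsto (F · j) atTop (nhds (a j)) := by
    intro j
    rcases Nat.eq_zero_or_pos j with rfl | hj
    · have hfz : (fun n => F n 0) = fun _ => (0:ℝ) := by
        funext n; simp [hF]
      have h0 : a 0 = 0 := by
        simp [ha, zero_pow (show 2*r ≠ 0 by omega)]
      rw [hfz, h0]
      exact tendsto_const_nhds
    · have hjp : (0:ℝ) < j := by exact_mod_cast hj
      have hlim := aux_lim j hj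
      have hne : (j:ℝ)^2 * π^2 / 2 ≠ 0 := by positivity
      have h1 : Tendsto (fun n : ℕ => (((n:ℝ)^2 * (1 - Real.cos (j * π / n)))⁻¹) ^ r)
          atTop (nhds ((((j:ℝ)^2 * π^2 / 2)⁻¹) ^ r)) := (hlim.inv₀ hne).pow r
      have hval : (((j:ℝ)^2 * π^2 / 2)⁻¹) ^ r = a j := by
        show _ = (2 / π ^ 2) ^ r * (1 / (j:ℝ) ^ (2 * r))
        rw [one_div, pow_mul, ← inv_pow, ← mul_pow]
        congr 1
        have hπ := Real.pi_ne_zero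
        field_simp
        rw [← mul_pow]
        congr 1
        ring
      rw [hval] at h1
      refine h1.congr' ?_
      filter_upwards [eventually_ge_atTop j] with n hn
      have : j ∈ Finset.Icc 1 n := Finset.mem_Icc.mpr ⟨hj, hn⟩
      simp only [hF]
      rw [if_pos this, one_div]
  have h_bound : ∀ᶠ n in atTop, ∀ j, ‖F n j‖ ≤ bound j := by
    apply Eventually.of_forall
    intro n j
    by_cases hj : j ∈ Finset.Icc 1 n
    · have hjp : (0:ℝ) < j := by
        exact_mod_cast (Finset.mem_Icc.mp hj).1
      have h2j : (0:ℝ) < 2 * (j:ℝ)^2 := by positivity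
      have hLj := hL n j hj
      have hLp : (0:ℝ) < (n:ℝ)^2 * (1 - Real.cos (j * π / n)) := lt_of_lt_of_le h2j hLj
      have h1 : (0:ℝ) ≤ 1 / ((n:ℝ)^2 * (1 - Real.cos (j * π / n))) := by positivity
      rw [hF]
      simp only [hj, if_true]
      rw [Real.norm_eq_abs, abs_of_nonneg (pow_nonneg h1 r)]
      exact pow_le_pow_left₀ h1 (by
        apply one_div_le_one_div_of_le h2j hLj) r
    · rw [hF]
      simp only [hj, if_false]
      rw [norm_zero, hbound]
      positivity
  have main := tendsto_tsum_of_dominated_convergence hsummable h_ab h_bound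
  have htsum_a : ∑' j, a j = (2 / π ^ 2) ^ r * c := (hc.mul_left _).tsum_eq
  rw [htsum_a] at main
  refine main.congr' ?_
  filter_upwards [eventually_ge_atTop 1] with n hn
  have hnp : (0:ℝ) < n := by exact_mod_cast hn
  rw [tsum_eq_sum (s := Finset.Icc 1 n) (fun j hj => by simp only [hF]; rw [if_neg hj])]
  rw [Finset.sum_div]
  refine Finset.sum_congr rfl fun j hj => ?_
  simp only [hF, hj, if_true]
  rw [div_pow, div_pow, one_pow, div_div, mul_pow, ← pow_mul]
  ring_nf

theorem stmt_10 (m : ℕ) (hm : m ∈ ({1, 2, 3, 4} : Finset ℕ)) :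
    Filter.Tendsto
      (fun n : ℕ =>
        (∑ I ∈ (Finset.Icc 1 n).powersetCard m,
            ∏ i ∈ I, 1 / (1 - Real.cos (i * Real.pi / n))) /
          (n : ℝ) ^ (2 * m))
      Filter.atTop (nhds (2 ^ m / ((2 * m + 1).factorial : ℝ))) := by
  have hπ : (π:ℝ) ≠ 0 := Real.pi_ne_zero
  have hz1 : HasSum (fun j : ℕ => 1/(j:ℝ)^(2*1)) (π^2/6) := by
    convert hasSum_zeta_two using 2
  have hz2 : HasSum (fun j : ℕ => 1/(j:ℝ)^(2*2)) (π^4/90) := by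
    convert hasSum_zeta_four using 2
  have T1 := psum_lim 1 le_rfl hz1
  have T2 := psum_lim 2 (by norm_num) hz2
  have T3 := psum_lim 3 (by norm_num) hz3
  have T4 := psum_lim 4 (by norm_num) hz4
  rw [show (2/π^2)^1 * (π^2/6) = (1/3:ℝ) by field_simp <;> ring] at T1
  rw [show (2/π^2)^2 * (π^4/90) = (2/45:ℝ) by field_simp <;> ring] at T2
  rw [show (2/π^2)^3 * (π^6/945) = (8/945:ℝ) by field_simp <;> ring] at T3
  rw [show (2/π^2)^4 * (π^8/9450) = (8/4725:ℝ) by field_simp <;> ring] at T4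
  fin_cases hm
  · -- m = 1
    refine (Tendsto.congr' ?_ T1).mono_right (le_of_eq ?_)
    swap
    · congr 1
      norm_num [Nat.factorial]
    filter_upwards with n
    obtain ⟨h1, -, -, -⟩ := newton (Finset.Icc 1 n) (fun i => 1 / (1 - Real.cos (i * π / n)))
    simp only [Esym, Psum] at h1
    rw [← h1]
  · -- m = 2
    have Tg := ((T1.mul T1).sub T2).div_const 2
    refine (Tendsto.congr' ?_ Tg).mono_right (le_of_eq ?_)
    swap
    · congr 1
      norm_num [Nat.factorial]
    filter_upwards [eventually_ge_atTop 1] with n hn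
    have hn0 : ((n:ℝ)) ≠ 0 := Nat.cast_ne_zero.mpr (by omega)
    obtain ⟨h1, h2, -, -⟩ := newton (Finset.Icc 1 n) (fun i => 1 / (1 - Real.cos (i * π / n)))
    simp only [Esym, Psum] at h1 h2
    rw [h1] at h2
    beta_reduce
    set A := ∑ j ∈ Finset.Icc 1 n, (1 / (1 - Real.cos (j * π / n))) ^ 1 with hA
    set B := ∑ j ∈ Finset.Icc 1 n, (1 / (1 - Real.cos (j * π / n))) ^ 2 with hB
    set C := ∑ I ∈ (Finset.Icc 1 n).powersetCard 2, ∏ i ∈ I, 1 / (1 - Real.cos (i * π / n))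
      with hC
    have hC2 : C = (A*A - B)/2 := by linarith
    rw [hC2]
    field_simp
    ring
  · -- m = 3
    have Tg := (((((T1.mul T1).sub T2).div_const 2).mul T1).sub (T1.mul T2) |>.add T3).div_const 3
    refine (Tendsto.congr' ?_ Tg).mono_right (le_of_eq ?_)
    swap
    · congr 1
      norm_num [Nat.factorial]
    filter_upwards [eventually_ge_atTop 1] with n hn
    have hn0 : ((n:ℝ)) ≠ 0 := Nat.cast_ne_zero.mpr (by omega)
    obtain ⟨h1, h2, h3, -⟩ := newton (Finset.Icc 1 n) (fun i => 1 / (1 - Real.cos (i * π / n)))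
    simp only [Esym, Psum] at h1 h2 h3
    rw [h1] at h2 h3
    beta_reduce
    set A := ∑ j ∈ Finset.Icc 1 n, (1 / (1 - Real.cos (j * π / n))) ^ 1 with hA
    set B := ∑ j ∈ Finset.Icc 1 n, (1 / (1 - Real.cos (j * π / n))) ^ 2 with hB
    set B3 := ∑ j ∈ Finset.Icc 1 n, (1 / (1 - Real.cos (j * π / n))) ^ 3 with hB3
    set C := ∑ I ∈ (Finset.Icc 1 n).powersetCard 2, ∏ i ∈ I, 1 / (1 - Real.cos (i * π / n))
      with hC
    set D := ∑ I ∈ (Finset.Icc 1 n).powersetCard 3, ∏ i ∈ I, 1 / (1 - Real.cos (i * π / n))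
      with hD
    have hC2 : C = (A*A - B)/2 := by linarith
    have hD3 : D = (C*A - A*B + B3)/3 := by linarith
    rw [hD3, hC2]
    field_simp
    ring
  · -- m = 4
    have Tg2 := ((T1.mul T1).sub T2).div_const 2
    have Tg3 := ((Tg2.mul T1).sub (T1.mul T2) |>.add T3).div_const 3
    have Tg := ((Tg3.mul T1).sub (Tg2.mul T2) |>.add (T1.mul T3) |>.sub T4).div_const 4
    refine (Tendsto.congr' ?_ Tg).mono_right (le_of_eq ?_)
    swap
    · congr 1
      norm_num [Nat.factorial]
    filter_upwards [eventually_ge_atTop 1] with n hn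
    have hn0 : ((n:ℝ)) ≠ 0 := Nat.cast_ne_zero.mpr (by omega)
    obtain ⟨h1, h2, h3, h4⟩ := newton (Finset.Icc 1 n) (fun i => 1 / (1 - Real.cos (i * π / n)))
    simp only [Esym, Psum] at h1 h2 h3 h4
    rw [h1] at h2 h3 h4
    beta_reduce
    set A := ∑ j ∈ Finset.Icc 1 n, (1 / (1 - Real.cos (j * π / n))) ^ 1 with hA
    set B := ∑ j ∈ Finset.Icc 1 n, (1 / (1 - Real.cos (j * π / n))) ^ 2 with hB
    set B3 := ∑ j ∈ Finset.Icc 1 n, (1 / (1 - Real.cos (j * π / n))) ^ 3 with hB3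
    set B4 := ∑ j ∈ Finset.Icc 1 n, (1 / (1 - Real.cos (j * π / n))) ^ 4 with hB4
    set C := ∑ I ∈ (Finset.Icc 1 n).powersetCard 2, ∏ i ∈ I, 1 / (1 - Real.cos (i * π / n))
      with hC
    set D := ∑ I ∈ (Finset.Icc 1 n).powersetCard 3, ∏ i ∈ I, 1 / (1 - Real.cos (i * π / n))
      with hD
    set E := ∑ I ∈ (Finset.Icc 1 n).powersetCard 4, ∏ i ∈ I, 1 / (1 - Real.cos (i * π / n))
      with hE
    have hC2 : C = (A*A - B)/2 := by linarith
    have hD3 : D = (C*A - A*B + B3)/3 := by linarith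
    have hE4 : E = (D*A - C*B + A*B3 - B4)/4 := by linarith
    rw [hE4, hD3, hC2]
    field_simp
    ring
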